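/- For Re(z) > −2, complex w, and real v > 0, one has ∫₀^∞ u^z e^{−u²v²} sinh(wuv) du = (1/2) w v^{−1−z} Γ(1 + z/2) ₁F₁(1 + z/2; 3/2; w²/4). -/

import Mathlib

open Real MeasureTheory Set

/-- Pochhammer symbol `(a)_n`. -/
noncomputable def poch (a : ℂ) (n : ℕ) : ℂ := ∏ i ∈ Finset.range n, (a + i)

/-- Confluent hypergeometric function `₁F₁(a;c;z)`. -/
noncomputable def hyp1F1 (a c z : ℂ) : ℂ :=
  ∑' n : ℕ, poch a n / poch c n * z ^ n / (n.factorial : ℂ)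

open Complex Filter

lemma aux_integral {a : ℂ} (ha : -1 < a.re) {b : ℝ} (hb : 0 < b) :
    ∫ u in Ioi (0:ℝ), (u:ℂ)^a * Real.exp (-(b*u^2))
      = (1/(b:ℂ))^((a+1)/2) * Complex.Gamma ((a+1)/2) / 2 := by
  have h2 : 0 < ((a+1)/2).re := by
    simp only [div_ofNat_re, add_re, one_re]
    linarith
  have base := integral_cpow_mul_exp_neg_mul_Ioi h2 hb
  have sub := MeasureTheory.integral_comp_rpow_Ioi
    (fun y : ℝ => (y:ℂ)^((a+1)/2 - 1) * Complex.exp (-(b*y))) (p := 2) two_ne_zero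
  have key : ∫ u in Ioi (0:ℝ), (u:ℂ)^a * Real.exp (-(b*u^2))
      = (1/2 : ℂ) * ∫ x in Ioi (0:ℝ),
          ((|2| * x ^ ((2:ℝ) - 1)) • ((((x:ℝ) ^ (2:ℝ) : ℝ):ℂ)^((a+1)/2 - 1)
            * Complex.exp (-(b * ((x:ℝ) ^ (2:ℝ) : ℝ))))) := by
    rw [← integral_const_mul]
    refine setIntegral_congr_fun measurableSet_Ioi (fun x hx => ?_)
    rw [mem_Ioi] at hx
    have hx2 : (x:ℝ) ^ (2:ℝ) = x ^ 2 := by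
      rw [← Real.rpow_natCast x 2]; norm_num
    have hc : ((x ^ (2:ℝ) : ℝ):ℂ) ^ ((a+1)/2 - 1) = (x:ℂ) ^ (a - 1) := by
      rw [← Complex.cpow_mul_ofReal_nonneg hx.le 2 ((a+1)/2 - 1)]
      congr 1
      push_cast
      ring
    rw [hc, hx2]
    have hxne : (x:ℂ) ≠ 0 := by exact_mod_cast hx.ne'
    have : (x:ℂ) ^ a = (x:ℂ) ^ (a - 1) * (x:ℂ) := by
      nth_rewrite 1 [show a = (a-1)+1 by ring]
      rw [Complex.cpow_add _ _ hxne, Complex.cpow_one]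
    rw [this]
    rw [Complex.real_smul, _root_.abs_two]
    rw [show ((2:ℝ) - 1) = 1 by norm_num, Real.rpow_one]
    push_cast
    ring
  rw [key, sub, base]
  ring


lemma aux_integral_real {q : ℝ} (hq : -1 < q) {b : ℝ} (hb : 0 < b) :
    ∫ u in Ioi (0:ℝ), u ^ q * Real.exp (-(b*u^2))
      = b ^ (-(q+1)/2) * (1/2) * Real.Gamma ((q+1)/2) := by
  rw [show b ^ (-(q+1)/2) * (1/2) * Real.Gamma ((q+1)/2)
      = b ^ (-(q+1)/2) * Real.Gamma ((q+1)/2) * (1/2) by ring]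
  rw [show b ^ (-(q+1)/2) * Real.Gamma ((q+1)/2) * (1/2)
      = b ^ (-(q+1)/2) * (1/2) * Real.Gamma ((q+1)/2) by ring,
    ← integral_rpow_mul_exp_neg_mul_rpow two_pos hq hb]
  refine setIntegral_congr_fun measurableSet_Ioi (fun x hx => ?_)
  rw [mem_Ioi] at hx
  rw [show (x:ℝ) ^ (2:ℝ) = x ^ 2 by rw [← Real.rpow_natCast x 2]; norm_num]
  ring_nf

lemma poch_gamma (a : ℂ) (ha : 0 < a.re) (n : ℕ) :
    Complex.Gamma a * poch a n = Complex.Gamma (a + n) := by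
  induction n with
  | zero => simp [poch]
  | succ n ih =>
    have hne : a + n ≠ 0 := by
      intro h
      have := congrArg Complex.re h
      simp only [add_re, natCast_re, zero_re] at this
      have : (0:ℝ) ≤ (n:ℝ) := n.cast_nonneg
      linarith
    rw [poch, Finset.prod_range_succ, ← mul_assoc, ← poch, ih]
    rw [show a + ((n:ℕ)+1 : ℕ) = (a + n) + 1 by push_cast; ring,
      Complex.Gamma_add_one _ hne]
    ring

lemma poch_half (n : ℕ) :
    (4:ℂ)^n * (n.factorial : ℂ) * poch (3/2 : ℂ) n = ((2*n+1).factorial : ℂ) := by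
  induction n with
  | zero => simp [poch]
  | succ n ih =>
    rw [poch, Finset.prod_range_succ, ← poch]
    have h1 : (2*(n+1)+1) = (2*n+3) := by ring
    have h2 : ((2*n+3).factorial) = (2*n+3) * ((2*n+2) * (2*n+1).factorial) := by
      rw [show 2*n+3 = (2*n+2)+1 by ring, Nat.factorial_succ,
        show 2*n+2 = (2*n+1)+1 by ring, Nat.factorial_succ]
    rw [h1, h2, Nat.factorial_succ]
    push_cast
    rw [← ih]
    ring

lemma poch_half_ne (n : ℕ) : poch (3/2 : ℂ) n ≠ 0 := by
  intro h
  have := poch_half n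
  rw [h, mul_zero] at this
  exact (Nat.cast_ne_zero.mpr (Nat.factorial_ne_zero _)) this.symm


lemma norm_f (z w : ℂ) {v : ℝ} (hv : 0 < v) (n : ℕ) {u : ℝ} (hu : 0 < u) :
    ‖(u:ℂ)^z * (Real.exp (-u^2*v^2) : ℂ) * ((w*u*v)^(2*n+1) / ((2*n+1).factorial : ℂ))‖
      = (‖w‖*v)^(2*n+1) / ((2*n+1).factorial : ℝ)
        * (u ^ (z.re+((2*n+1 : ℕ):ℝ)) * Real.exp (-(v^2*u^2))) := by
  have h1 : ‖(u:ℂ)^z‖ = u ^ z.re := by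
    rw [Complex.norm_cpow_eq_rpow_re_of_pos hu]
  have h2 : ‖((Real.exp (-u^2*v^2)):ℂ)‖ = Real.exp (-(v^2*u^2)) := by
    rw [Complex.norm_real, Real.norm_eq_abs, abs_of_pos (Real.exp_pos _)]
    ring_nf
  have h3 : ‖w*u*v‖ = ‖w‖*u*v := by
    rw [norm_mul, norm_mul, Complex.norm_real, Complex.norm_real, Real.norm_eq_abs,
      Real.norm_eq_abs, abs_of_pos hu, abs_of_pos hv]
  have h4 : ‖(((2*n+1).factorial : ℕ) : ℂ)‖ = (((2*n+1).factorial : ℕ) : ℝ) := by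
    simp
  rw [norm_mul, norm_mul, norm_div, norm_pow, h1, h2, h3, h4,
    Real.rpow_add hu, Real.rpow_natCast]
  ring

lemma step_int (z w : ℂ) (hz : -2 < z.re) {v : ℝ} (hv : 0 < v) (n : ℕ) :
    IntegrableOn (fun u : ℝ =>
      (u:ℂ)^z * (Real.exp (-u^2*v^2) : ℂ) * ((w*u*v)^(2*n+1) / ((2*n+1).factorial : ℂ)))
      (Ioi 0) := by
  have hb : 0 < v^2 := by positivity
  have hs : (-1:ℝ) < z.re + ((2*n+1 : ℕ):ℝ) := by
    push_cast
    have hn : (0:ℝ) ≤ n := n.cast_nonneg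
    linarith
  have hg : IntegrableOn (fun u : ℝ => (‖w‖*v)^(2*n+1) / (((2*n+1).factorial : ℕ) : ℝ)
      * (u ^ (z.re+((2*n+1 : ℕ):ℝ)) * Real.exp (-(v^2)*u^2))) (Ioi 0) := by
    exact (integrableOn_rpow_mul_exp_neg_mul_sq hb hs).const_mul _
  refine Integrable.mono' hg ?_ ?_
  · apply ContinuousOn.aestronglyMeasurable ?_ measurableSet_Ioi
    apply ContinuousOn.mul
    apply ContinuousOn.mul
    · intro u hu
      exact (Complex.continuousAt_ofReal_cpow_const u z (Or.inr (ne_of_gt hu))).continuousWithinAt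
    · exact (Complex.continuous_ofReal.comp (by continuity)).continuousOn
    · exact ((by continuity : Continuous fun u : ℝ => ((w*u*v)^(2*n+1) / ((2*n+1).factorial : ℂ)))).continuousOn
  · rw [ae_restrict_iff' measurableSet_Ioi]
    filter_upwards with u hu
    rw [norm_f z w hv n hu]
    apply le_of_eq
    congr 1
    · congr 1
      ring
lemma step_norm (z w : ℂ) (hz : -2 < z.re) {v : ℝ} (hv : 0 < v) (n : ℕ) :
    ∫ u in Ioi (0:ℝ),
      ‖(u:ℂ)^z * (Real.exp (-u^2*v^2) : ℂ) * ((w*u*v)^(2*n+1) / ((2*n+1).factorial : ℂ))‖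
    = (‖w‖*v)^(2*n+1) / (((2*n+1).factorial : ℕ) : ℝ)
        * ((v^2) ^ (-(1+z.re/2+(n:ℝ))) * (1/2) * Real.Gamma (1+z.re/2+(n:ℝ))) := by
  have hb : 0 < v^2 := by positivity
  have hs : (-1:ℝ) < z.re + ((2*n+1 : ℕ):ℝ) := by
    push_cast
    have hn : (0:ℝ) ≤ n := n.cast_nonneg
    linarith
  have := aux_integral_real hs hb
  rw [setIntegral_congr_fun measurableSet_Ioi (fun u hu => norm_f z w hv n (mem_Ioi.mp hu)),
    integral_const_mul, this]
  have e1 : -(z.re + ((2*n+1 : ℕ):ℝ) + 1)/2 = -(1+z.re/2+(n:ℝ)) := by push_cast; ring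
  have e2 : (z.re + ((2*n+1 : ℕ):ℝ) + 1)/2 = 1+z.re/2+(n:ℝ) := by push_cast; ring
  rw [e1, e2]


lemma step_value (z w : ℂ) (hz : -2 < z.re) {v : ℝ} (hv : 0 < v) (n : ℕ) :
    ∫ u in Ioi (0:ℝ),
      (u:ℂ)^z * (Real.exp (-u^2*v^2) : ℂ) * ((w*u*v)^(2*n+1) / ((2*n+1).factorial : ℂ))
    = w^(2*n+1) * (v:ℂ)^(2*n+1) / (((2*n+1).factorial : ℕ) : ℂ)
        * ((1/((v^2:ℝ):ℂ))^(1+z/2+(n:ℂ)) * Complex.Gamma (1+z/2+(n:ℂ)) / 2) := by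
  have hb : 0 < v^2 := by positivity
  have ha : -1 < (z + ((2*n+1 : ℕ):ℂ)).re := by
    simp only [add_re, natCast_re]
    push_cast
    have hn : (0:ℝ) ≤ n := n.cast_nonneg
    linarith
  have key : ∀ u ∈ Ioi (0:ℝ),
      (u:ℂ)^z * (Real.exp (-u^2*v^2) : ℂ) * ((w*u*v)^(2*n+1) / ((2*n+1).factorial : ℂ))
      = w^(2*n+1) * (v:ℂ)^(2*n+1) / (((2*n+1).factorial : ℕ) : ℂ)
          * ((u:ℂ)^(z + ((2*n+1 : ℕ):ℂ)) * Real.exp (-(v^2*u^2))) := by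
    intro u hu
    rw [mem_Ioi] at hu
    have hune : (u:ℂ) ≠ 0 := by exact_mod_cast hu.ne'
    have hcp : (u:ℂ)^(z + ((2*n+1 : ℕ):ℂ)) = (u:ℂ)^z * (u:ℂ)^(2*n+1) := by
      rw [Complex.cpow_add _ _ hune, Complex.cpow_natCast]
    rw [hcp]
    have : Real.exp (-u^2*v^2) = Real.exp (-(v^2*u^2)) := by ring_nf
    rw [this]
    ring
  rw [setIntegral_congr_fun measurableSet_Ioi key, integral_const_mul, aux_integral ha hb]
  have e : (z + ((2*n+1 : ℕ):ℂ) + 1)/2 = 1+z/2+(n:ℂ) := by push_cast; ring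
  rw [e]

lemma termwise_poch (z w : ℂ) (hz : -2 < z.re) {v : ℝ} (hv : 0 < v) (n : ℕ)
    (hΓ : Complex.Gamma (1+z/2) * poch (1+z/2) n = Complex.Gamma (1+z/2+(n:ℂ)))
    (hP : (4:ℂ)^n * (n.factorial : ℂ) * poch (3/2 : ℂ) n = ((2*n+1).factorial : ℂ)) :
    w^(2*n+1) * (v:ℂ)^(2*n+1) / (((2*n+1).factorial : ℕ) : ℂ)
        * ((1/((v^2:ℝ):ℂ))^(1+z/2+(n:ℂ)) * Complex.Gamma (1+z/2+(n:ℂ)) / 2)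
    = (1/2) * w * (v:ℂ)^(-1-z : ℂ) * Complex.Gamma (1 + z/2) *
        (poch (1+z/2) n / poch (3/2 : ℂ) n * (w^2/4)^n / (n.factorial : ℂ)) := by
  have hvne : (v:ℂ) ≠ 0 := by exact_mod_cast hv.ne'
  have hv2 : (1/((v^2:ℝ):ℂ))^(1+z/2+(n:ℂ)) = (v:ℂ)^(((-2:ℝ):ℂ) * (1+z/2+(n:ℂ))) := by
    rw [Complex.cpow_mul_ofReal_nonneg hv.le (-2) (1+z/2+(n:ℂ))]
    congr 2
    rw [Real.rpow_neg hv.le, show ((2:ℝ)) = ((2:ℕ):ℝ) by norm_num, Real.rpow_natCast]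
    push_cast
    rw [one_div]
  have hvp : (v:ℂ)^(-1-z:ℂ) = (v:ℂ)^(2*n+1) * (v:ℂ)^(((-2:ℝ):ℂ) * (1+z/2+(n:ℂ))) := by
    rw [← Complex.cpow_natCast (v:ℂ) (2*n+1), ← Complex.cpow_add _ _ hvne]
    congr 1
    push_cast
    ring
  have hPoch : poch (3/2 : ℂ) n = ((2*n+1).factorial : ℂ) / ((4:ℂ)^n * (n.factorial : ℂ)) := by
    rw [eq_div_iff (mul_ne_zero (pow_ne_zero n (by norm_num : (4:ℂ) ≠ 0)) (Nat.cast_ne_zero.mpr (Nat.factorial_ne_zero n)))]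
    rw [← hP]; ring
  rw [hv2, hvp, ← hΓ, hPoch]
  have f1 : (((2*n+1).factorial : ℕ) : ℂ) ≠ 0 := Nat.cast_ne_zero.mpr (Nat.factorial_ne_zero _)
  have f2 : ((n.factorial : ℕ) : ℂ) ≠ 0 := Nat.cast_ne_zero.mpr (Nat.factorial_ne_zero _)
  have f3 : ((4:ℂ))^n ≠ 0 := by norm_num
  field_simp
  rw [div_pow, mul_div_assoc', mul_right_comm _ ((4:ℂ)^n), mul_div_cancel_right₀ _ f3]; ring


lemma step_summable (z w : ℂ) (hz : -2 < z.re) {v : ℝ} (hv : 0 < v) :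
    Summable (fun n : ℕ => (‖w‖*v)^(2*n+1) / (((2*n+1).factorial : ℕ) : ℝ)
        * ((v^2) ^ (-(1+z.re/2+(n:ℝ))) * (1/2) * Real.Gamma (1+z.re/2+(n:ℝ)))) := by
  set ρ : ℝ := 1 + z.re/2 with hρdef
  have hρ : 0 < ρ := by simp only [hρdef]; linarith
  set M : ℝ := ‖w‖*v + 1 with hMdef
  have hM : 0 < M := by positivity
  have hwv : 0 ≤ ‖w‖*v := by positivity
  have hb : (0:ℝ) < v^2 := by positivity
  set d : ℕ → ℝ := fun n => M^(2*n+1) / (((2*n+1).factorial : ℕ) : ℝ)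
        * ((v^2) ^ (-(ρ+(n:ℝ))) * (1/2) * Real.Gamma (ρ+(n:ℝ))) with hd
  have hdpos : ∀ n, 0 < d n := by
    intro n
    have h1 : 0 < Real.Gamma (ρ+(n:ℝ)) := Real.Gamma_pos_of_pos (by positivity)
    have h2 : (0:ℝ) < (((2*n+1).factorial : ℕ) : ℝ) := by
      exact_mod_cast (2*n+1).factorial_pos
    have h3 : (0:ℝ) < (v^2) ^ (-(ρ+(n:ℝ))) := Real.rpow_pos_of_pos hb _
    positivity
  have hratio : ∀ n : ℕ, d (n+1) = d n * (M^2/v^2 * (ρ+(n:ℝ)) / ((2*(n:ℝ)+3)*(2*(n:ℝ)+2))) := by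
    intro n
    have hfac : (((2*(n+1)+1).factorial : ℕ) : ℝ)
        = (2*(n:ℝ)+3)*((2*(n:ℝ)+2)*(((2*n+1).factorial : ℕ) : ℝ)) := by
      rw [show 2*(n+1)+1 = (2*n+2)+1 by ring, Nat.factorial_succ,
        show 2*n+2 = (2*n+1)+1 by ring, Nat.factorial_succ]
      push_cast
      ring
    have hgam : Real.Gamma (ρ+((n+1:ℕ):ℝ)) = (ρ+(n:ℝ)) * Real.Gamma (ρ+(n:ℝ)) := by
      rw [show ρ+((n+1:ℕ):ℝ) = (ρ+(n:ℝ)) + 1 by push_cast; ring,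
        Real.Gamma_add_one (by positivity)]
    have hrp : (v^2) ^ (-(ρ+((n+1:ℕ):ℝ))) = (v^2) ^ (-(ρ+(n:ℝ))) * (v^2)⁻¹ := by
      rw [show -(ρ+((n+1:ℕ):ℝ)) = -(ρ+(n:ℝ)) + (-1) by push_cast; ring,
        Real.rpow_add hb, Real.rpow_neg_one]
    have hpow : M^(2*(n+1)+1) = M^(2*n+1) * M^2 := by ring
    rw [hd]
    simp only
    rw [hfac, hgam, hrp, hpow]
    have h2 : (((2*n+1).factorial : ℕ) : ℝ) ≠ 0 := by
      exact_mod_cast (2*n+1).factorial_ne_zero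
    have h3 : (2*(n:ℝ)+3) ≠ 0 := by positivity
    have h4 : (2*(n:ℝ)+2) ≠ 0 := by positivity
    field_simp
  have hdsum : Summable d := by
    apply summable_of_ratio_norm_eventually_le (r := 1/2) (by norm_num)
    rw [eventually_atTop]
    refine ⟨max 1 ⌈M^2/v^2*(ρ+1)⌉₊, fun n hn => ?_⟩
    have hn1 : (1:ℝ) ≤ (n:ℝ) := by
      exact_mod_cast le_trans (le_max_left _ _) hn
    have hn2 : M^2/v^2*(ρ+1) ≤ (n:ℝ) := by
      refine le_trans (Nat.le_ceil _) ?_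
      exact_mod_cast le_trans (le_max_right _ _) hn
    rw [Real.norm_of_nonneg (hdpos (n+1)).le, Real.norm_of_nonneg (hdpos n).le, hratio n]
    rw [mul_comm (1/2 : ℝ) (d n)]
    apply mul_le_mul_of_nonneg_left ?_ (hdpos n).le
    rw [div_le_iff₀ (by positivity)]
    have hB : 0 < M^2/v^2 := by positivity
    nlinarith [mul_nonneg (mul_nonneg hB.le hρ.le) (sub_nonneg.mpr hn1),
      mul_le_mul_of_nonneg_right hn2 (le_trans zero_le_one hn1)]
  refine Summable.of_nonneg_of_le (fun n => ?_) (fun n => ?_) hdsum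
  · have h1 : 0 < Real.Gamma (ρ+(n:ℝ)) := Real.Gamma_pos_of_pos (by positivity)
    have h3 : (0:ℝ) < (v^2) ^ (-(ρ+(n:ℝ))) := Real.rpow_pos_of_pos hb _
    have h2 : (0:ℝ) < (((2*n+1).factorial : ℕ) : ℝ) := by
      exact_mod_cast (2*n+1).factorial_pos
    positivity
  · rw [hd]
    simp only
    have h1 : 0 < Real.Gamma (ρ+(n:ℝ)) := Real.Gamma_pos_of_pos (by positivity)
    have h3 : (0:ℝ) < (v^2) ^ (-(ρ+(n:ℝ))) := Real.rpow_pos_of_pos hb _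
    have h2 : (0:ℝ) < (((2*n+1).factorial : ℕ) : ℝ) := by
      exact_mod_cast (2*n+1).factorial_pos
    gcongr ?_ / ?_ * ?_
    · exact pow_le_pow_left₀ hwv (by simp [hMdef]) _


/-- For `Re(z) > −2`, complex `w`, and real `v > 0`,
`∫₀^∞ u^z e^{−u²v²} sinh(wuv) du = (1/2) w v^{−1−z} Γ(1+z/2) ₁F₁(1+z/2;3/2;w²/4)`. -/
theorem integral_power_sinh (z w : ℂ) (hz : -2 < z.re) (v : ℝ) (hv : 0 < v) :
    ∫ u in Ioi (0:ℝ), (u:ℂ)^z * (Real.exp (-u^2*v^2) : ℂ) * Complex.sinh (w * u * v)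
      = (1/2) * w * (v:ℂ)^(-1-z : ℂ) * Complex.Gamma (1 + z/2) *
        hyp1F1 (1 + z/2) (3/2) (w^2/4) := by
  have hs : 0 < (1 + z/2).re := by
    simp only [add_re, one_re, div_ofNat_re]
    linarith
  have hpt : ∀ u : ℝ, (u:ℂ)^z * (Real.exp (-u^2*v^2) : ℂ) * Complex.sinh (w * u * v)
      = ∑' n : ℕ, (u:ℂ)^z * (Real.exp (-u^2*v^2) : ℂ)
          * ((w*u*v)^(2*n+1) / ((2*n+1).factorial : ℂ)) := by
    intro u
    exact ((Complex.hasSum_sinh (w*u*v)).mul_left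
      ((u:ℂ)^z * (Real.exp (-u^2*v^2) : ℂ))).tsum_eq.symm
  calc ∫ u in Ioi (0:ℝ), (u:ℂ)^z * (Real.exp (-u^2*v^2) : ℂ) * Complex.sinh (w * u * v)
      = ∫ u in Ioi (0:ℝ), ∑' n : ℕ, (u:ℂ)^z * (Real.exp (-u^2*v^2) : ℂ)
          * ((w*u*v)^(2*n+1) / ((2*n+1).factorial : ℂ)) := by
        exact setIntegral_congr_fun measurableSet_Ioi (fun u _ => hpt u)
    _ = ∑' n : ℕ, ∫ u in Ioi (0:ℝ), (u:ℂ)^z * (Real.exp (-u^2*v^2) : ℂ)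
          * ((w*u*v)^(2*n+1) / ((2*n+1).factorial : ℂ)) := by
        refine (MeasureTheory.integral_tsum_of_summable_integral_norm
          (fun n => step_int z w hz hv n) ?_).symm
        exact (summable_congr (fun n => step_norm z w hz hv n)).mpr
          (step_summable z w hz hv)
    _ = ∑' n : ℕ, (1/2) * w * (v:ℂ)^(-1-z : ℂ) * Complex.Gamma (1 + z/2) *
          (poch (1+z/2) n / poch (3/2 : ℂ) n * (w^2/4)^n / (n.factorial : ℂ)) := by
        refine tsum_congr (fun n => ?_)
        rw [step_value z w hz hv n]
        exact termwise_poch z w hz hv n (poch_gamma (1+z/2) hs n) (poch_half n)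
    _ = (1/2) * w * (v:ℂ)^(-1-z : ℂ) * Complex.Gamma (1 + z/2) *
        hyp1F1 (1 + z/2) (3/2) (w^2/4) := tsum_mul_left
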